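/- For any binary word X, N_{10}(X)^2 = 2·N_{1010}(X) + 4·N_{1100}(X) + 2·N_{110}(X) + 2·N_{100}(X) + N_{10}(X). -/
import Mathlib


def patCount (w X : List Bool) : ℕ := X.sublists.count w

lemma patCount_def (w X : List Bool) :
    patCount w X = X.sublists'.countP (fun x => x = w) := by
  unfold patCount
  rw [← (X.sublists_perm_sublists').countP_eq]
  rw [List.count]
  apply List.countP_congr
  intro x _
  simp only [beq_iff_eq, decide_eq_true_eq]

lemma patCount_nil_pat (X : List Bool) : patCount [] X = 1 := by
  rw [patCount_def]
  induction X with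
  | nil => rfl
  | cons a X ih =>
      rw [List.sublists'_cons, List.countP_append, ih, List.countP_map]
      simp

lemma patCount_cons (a b : Bool) (w X : List Bool) :
    patCount (b :: w) (a :: X)
      = patCount (b :: w) X + if b = a then patCount w X else 0 := by
  rw [patCount_def, patCount_def, List.sublists'_cons, List.countP_append,
    List.countP_map]
  congr 1
  by_cases h : b = a
  · subst h
    rw [if_pos rfl, patCount_def]
    apply List.countP_congr
    intro x _
    simp
  · rw [if_neg h, List.countP_eq_zero]
    intro x _
    simp only [Function.comp_apply, decide_eq_true_eq]
    intro hx
    exact h (by injection hx.symm)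

set_option maxHeartbeats 1000000 in
lemma key (X : List Bool) :
    patCount [false] X ^ 2 = 2 * patCount [false, false] X + patCount [false] X ∧
    patCount [true, false] X * patCount [false] X
      = patCount [false, true, false] X + 2 * patCount [true, false, false] X
        + patCount [true, false] X ∧
    patCount [true, false] X ^ 2
      = 2 * patCount [true, false, true, false] X
        + 4 * patCount [true, true, false, false] X
        + 2 * patCount [true, true, false] X
        + 2 * patCount [true, false, false] X
        + patCount [true, false] X := by
  induction X with
  | nil => refine ⟨by decide, by decide, by decide⟩
  | cons a X ih =>
      obtain ⟨h1, h2, h3⟩ := ih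
      cases a <;>
        simp only [patCount_cons, patCount_nil_pat, if_true, if_false,
          Bool.true_eq_false, Bool.false_eq_true, reduceIte] <;>
        refine ⟨by nlinarith [h1, h2, h3], by nlinarith [h1, h2, h3],
          by nlinarith [h1, h2, h3]⟩

theorem N10_sq (X : List Bool) :
    patCount [true, false] X ^ 2
      = 2 * patCount [true, false, true, false] X
        + 4 * patCount [true, true, false, false] X
        + 2 * patCount [true, true, false] X
        + 2 * patCount [true, false, false] X
        + patCount [true, false] X := (key X).2.2
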